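/- Let c > 0, let b : ℝ → ℝ be twice differentiable with b(τ) > 0 for all τ, let f : ℝ → ℝ be twice differentiable, and let h : ℝ → ℝ. Suppose that for all τ: (1/b(τ)²) f″(τ) − (b′(τ)/b(τ)³) f′(τ) = h(τ). Define g(τ) := √(c/b(τ)) · f(τ) (so that f = √(b/c)·g). Then g is twice differentiable and for all τ: (1/b(τ)²) g″(τ) + ( b″(τ)/(2 b(τ)³) − 3 b′(τ)²/(4 b(τ)⁴) ) g(τ) = √(c/b(τ)) · h(τ). -/

import Mathlib

/-- The scale transformation `g := √(c/b)·f` turns the damped wave equation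
`(1/b²) f″ − (b′/b³) f′ = h` into the Klein–Gordon-type equation
`(1/b²) g″ + ( b″/(2b³) − 3b′²/(4b⁴) ) g = √(c/b)·h`. -/
theorem stmt2 (c : ℝ) (hc : 0 < c)
    (b : ℝ → ℝ) (hb1 : Differentiable ℝ b) (hb2 : Differentiable ℝ (deriv b))
    (hbpos : ∀ τ, 0 < b τ)
    (f : ℝ → ℝ) (hf1 : Differentiable ℝ f) (hf2 : Differentiable ℝ (deriv f))
    (h : ℝ → ℝ)
    (hwave : ∀ τ, (1 / (b τ) ^ 2) * deriv (deriv f) τ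
        - (deriv b τ / (b τ) ^ 3) * deriv f τ = h τ)
    (g : ℝ → ℝ) (hg : g = fun τ => Real.sqrt (c / b τ) * f τ) :
    Differentiable ℝ g ∧ Differentiable ℝ (deriv g) ∧
    ∀ τ, (1 / (b τ) ^ 2) * deriv (deriv g) τ
        + (deriv (deriv b) τ / (2 * (b τ) ^ 3)
            - 3 * (deriv b τ) ^ 2 / (4 * (b τ) ^ 4)) * g τ
      = Real.sqrt (c / b τ) * h τ := by
  have hg' : g = fun τ => Real.sqrt c / Real.sqrt (b τ) * f τ := by
    rw [hg]; funext τ; rw [Real.sqrt_div hc.le]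
  have hbne : ∀ τ, b τ ≠ 0 := fun τ => (hbpos τ).ne'
  have hsne : ∀ τ, Real.sqrt (b τ) ≠ 0 := fun τ => (Real.sqrt_pos.mpr (hbpos τ)).ne'
  have hsqb : ∀ τ, HasDerivAt (fun τ => Real.sqrt (b τ))
      (deriv b τ / (2 * Real.sqrt (b τ))) τ :=
    fun τ => ((hb1 τ).hasDerivAt).sqrt (hbne τ)
  -- first derivative of g
  have key : ∀ τ, HasDerivAt g
      (-(Real.sqrt c) * deriv b τ / (2 * Real.sqrt (b τ) ^ 3) * f τ
        + Real.sqrt c / Real.sqrt (b τ) * deriv f τ) τ := by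
    intro τ
    have hs : HasDerivAt (fun τ => Real.sqrt c / Real.sqrt (b τ))
        (-(Real.sqrt c) * deriv b τ / (2 * Real.sqrt (b τ) ^ 3)) τ := by
      have H := (hasDerivAt_const τ (Real.sqrt c)).div (hsqb τ) (hsne τ)
      convert H using 1 <;> try rfl
      set u := Real.sqrt (b τ) with hu
      have hu0 : u ≠ 0 := hsne τ
      field_simp
      ring
    have H := hs.mul ((hf1 τ).hasDerivAt)
    rw [hg']
    exact H
  have hdg : deriv g = fun τ =>
      -(Real.sqrt c) * deriv b τ / (2 * Real.sqrt (b τ) ^ 3) * f τ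
        + Real.sqrt c / Real.sqrt (b τ) * deriv f τ :=
    funext fun τ => (key τ).deriv
  -- second derivative of g
  have key2 : ∀ τ, HasDerivAt (fun τ =>
      -(Real.sqrt c) * deriv b τ / (2 * Real.sqrt (b τ) ^ 3) * f τ
        + Real.sqrt c / Real.sqrt (b τ) * deriv f τ)
      (Real.sqrt c / Real.sqrt (b τ) *
        ((3 * (deriv b τ) ^ 2 / (4 * (b τ) ^ 2) - deriv (deriv b) τ / (2 * b τ)) * f τ
          - (deriv b τ / b τ) * deriv f τ + deriv (deriv f) τ)) τ := by
    intro τ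
    have hden : (2 : ℝ) * Real.sqrt (b τ) ^ 3 ≠ 0 := by
      have := hsne τ; positivity
    have hN : HasDerivAt (fun τ => -(Real.sqrt c) * deriv b τ)
        (-(Real.sqrt c) * deriv (deriv b) τ) τ :=
      ((hb2 τ).hasDerivAt).const_mul _
    have hD : HasDerivAt (fun τ => 2 * Real.sqrt (b τ) ^ 3)
        (2 * ((3 : ℕ) * Real.sqrt (b τ) ^ 2 * (deriv b τ / (2 * Real.sqrt (b τ))))) τ :=
      ((hsqb τ).pow 3).const_mul 2
    have hA := (hN.div hD hden).mul ((hf1 τ).hasDerivAt)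
    have hs : HasDerivAt (fun τ => Real.sqrt c / Real.sqrt (b τ))
        (-(Real.sqrt c) * deriv b τ / (2 * Real.sqrt (b τ) ^ 3)) τ := by
      have H := (hasDerivAt_const τ (Real.sqrt c)).div (hsqb τ) (hsne τ)
      convert H using 1 <;> try rfl
      set u := Real.sqrt (b τ) with hu
      have hu0 : u ≠ 0 := hsne τ
      field_simp
      ring
    have hB := hs.mul ((hf2 τ).hasDerivAt)
    have H := hA.add hB
    convert H using 1 <;> try rfl
    have hu2 : Real.sqrt (b τ) ^ 2 = b τ := Real.sq_sqrt (hbpos τ).le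
    set u := Real.sqrt (b τ) with hu
    have hu0 : u ≠ 0 := hsne τ
    simp only [Pi.div_apply, ← hu]
    clear_value u
    rw [← hu2]
    field_simp
    ring
  refine ⟨fun τ => (key τ).differentiableAt, ?_, ?_⟩
  · rw [hdg]; exact fun τ => (key2 τ).differentiableAt
  · intro τ
    have hdd : deriv (deriv g) τ =
        Real.sqrt c / Real.sqrt (b τ) *
          ((3 * (deriv b τ) ^ 2 / (4 * (b τ) ^ 2) - deriv (deriv b) τ / (2 * b τ)) * f τ
            - (deriv b τ / b τ) * deriv f τ + deriv (deriv f) τ) := by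
      rw [hdg]; exact (key2 τ).deriv
    rw [hdd, hg', ← hwave τ, Real.sqrt_div hc.le]
    beta_reduce
    have hu2 : Real.sqrt (b τ) ^ 2 = b τ := Real.sq_sqrt (hbpos τ).le
    set u := Real.sqrt (b τ) with hu
    have hu0 : u ≠ 0 := hsne τ
    rw [← hu2]
    field_simp
    ring
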